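/- Let E be a real normed vector space, let c be a positive integer, and let x₁, …, x_c ∈ E be points such that the unit sphere {v ∈ E : ‖v‖ = 1} is covered by the open balls of radius 1/4 centred at x₁, …, x_c. Then there exist c subsets S₁, …, S_c of E whose union is all of E, each containing the zero vector, such that for every q ∈ {1,…,c} and all x, y ∈ S_q with x ≠ 0 and ‖x‖ ≤ ‖y‖, one has ‖y − x‖ < ‖y‖. -/

import Mathlib

/-- Generalized cone covering (from a `1/4`-ball covering of the unit sphere):
there exist `c` subsets of `E` covering `E`, each containing `0`, such that within
each subset, if `x ≠ 0` and `‖x‖ ≤ ‖y‖` then `‖y - x‖ < ‖y‖`. -/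
theorem cone_covering_from_sphere_covering
    {E : Type*} [NormedAddCommGroup E] [NormedSpace ℝ E]
    (c : ℕ) (hc : 0 < c) (x : Fin c → E)
    (hcover : ∀ v : E, ‖v‖ = 1 → ∃ i, ‖v - x i‖ < 1/4) :
    ∃ S : Fin c → Set E, (⋃ i, S i) = Set.univ ∧ (∀ i, (0 : E) ∈ S i) ∧
      ∀ i, ∀ u ∈ S i, ∀ v ∈ S i, u ≠ 0 → ‖u‖ ≤ ‖v‖ → ‖v - u‖ < ‖v‖ := by
  refine ⟨fun i => {0} ∪ {v : E | v ≠ 0 ∧ ‖(‖v‖⁻¹ • v) - x i‖ < 1/4}, ?_, fun i => Or.inl rfl, ?_⟩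
  · apply Set.eq_univ_of_forall
    intro v
    by_cases hv : v = 0
    · exact Set.mem_iUnion.2 ⟨⟨0, hc⟩, Or.inl hv⟩
    · have hnv : ‖v‖ ≠ 0 := norm_ne_zero_iff.2 hv
      have h1 : ‖(‖v‖⁻¹ • v)‖ = 1 := by
        rw [norm_smul, norm_inv, norm_norm, inv_mul_cancel₀ hnv]
      obtain ⟨i, hi⟩ := hcover _ h1
      exact Set.mem_iUnion.2 ⟨i, Or.inr ⟨hv, hi⟩⟩
  · rintro i u hu v hv hu0 hle
    rcases hu with rfl | ⟨-, hu⟩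
    · exact absurd rfl hu0
    rcases hv with rfl | ⟨hv0, hv⟩
    · simp at hle; exact absurd hle hu0
    have hnu : (0:ℝ) < ‖u‖ := norm_pos_iff.2 hu0
    have hnv : (0:ℝ) < ‖v‖ := norm_pos_iff.2 hv0
    have hd : ‖(‖v‖⁻¹ • v) - (‖u‖⁻¹ • u)‖ < 1/2 := by
      calc ‖(‖v‖⁻¹ • v) - (‖u‖⁻¹ • u)‖
          ≤ ‖(‖v‖⁻¹ • v) - x i‖ + ‖(‖u‖⁻¹ • u) - x i‖ := by
            rw [← dist_eq_norm, ← dist_eq_norm, ← dist_eq_norm]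
            exact dist_triangle_right _ _ _
        _ < 1/4 + 1/4 := add_lt_add hv hu
        _ = 1/2 := by norm_num
    have key : v - u = ‖u‖ • ((‖v‖⁻¹ • v) - (‖u‖⁻¹ • u)) + (‖v‖ - ‖u‖) • (‖v‖⁻¹ • v) := by
      have h2 : ‖v‖ • (‖v‖⁻¹ • v) = v := by
        rw [smul_smul, mul_inv_cancel₀ hnv.ne', one_smul]
      have h3 : ‖u‖ • (‖u‖⁻¹ • u) = u := by
        rw [smul_smul, mul_inv_cancel₀ hnu.ne', one_smul]
      rw [smul_sub, sub_smul, h3]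
      abel_nf
      rw [h2]
      abel
    have h1 : ‖(‖v‖⁻¹ • v)‖ = 1 := by
      rw [norm_smul, norm_inv, norm_norm, inv_mul_cancel₀ hnv.ne']
    calc ‖v - u‖ ≤ ‖‖u‖ • ((‖v‖⁻¹ • v) - (‖u‖⁻¹ • u))‖ + ‖(‖v‖ - ‖u‖) • (‖v‖⁻¹ • v)‖ := by
          rw [key]; exact norm_add_le _ _
      _ = ‖u‖ * ‖(‖v‖⁻¹ • v) - (‖u‖⁻¹ • u)‖ + |‖v‖ - ‖u‖| * 1 := by
          rw [norm_smul, norm_smul, Real.norm_eq_abs, Real.norm_eq_abs, abs_norm, h1]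
      _ < ‖u‖ * (1/2) + (‖v‖ - ‖u‖) := by
          rw [abs_of_nonneg (sub_nonneg.2 hle), mul_one]
          exact add_lt_add_left (by exact (mul_lt_mul_iff_right₀ hnu).2 hd) _
      _ ≤ ‖v‖ := by linarith
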